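/- For a connected finite undirected graph G, the second smallest Laplacian eigenvalue satisfies λ₂(L) ≤ 2·i(G), where i(G) is the isoperimetric constant. -/

import Mathlib

open Matrix Finset

/-- The number of boundary edges of a vertex set `S`: ordered pairs (i,j) with i ∈ S,
j ∉ S, and i adjacent to j. -/
noncomputable def edgeBoundaryCount {V : Type*} (G : SimpleGraph V) (S : Set V) : ℕ :=
  {p : V × V | G.Adj p.1 p.2 ∧ p.1 ∈ S ∧ p.2 ∉ S}.ncard

/-- The isoperimetric constant of a finite graph. -/
noncomputable def isoConst (V : Type*) [Fintype V] (G : SimpleGraph V) : ℝ :=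
  sInf {x : ℝ | ∃ S : Set V, S.Nonempty ∧ 2 * S.ncard ≤ Fintype.card V ∧
    x = (edgeBoundaryCount G S : ℝ) / (S.ncard : ℝ)}

/-- The second smallest eigenvalue (with multiplicity) of the Laplacian matrix of `G`:
the algebraic connectivity. -/
noncomputable def lambda2 {V : Type*} [Fintype V] [DecidableEq V] (G : SimpleGraph V)
    [DecidableRel G.Adj] : ℝ :=
  if h : 1 < Fintype.card V then
    let f : Fin (Fintype.card V) → ℝ := fun i =>
      (SimpleGraph.posSemidef_lapMatrix ℝ G).1.eigenvalues ((Fintype.equivFin V).symm i)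
    (f ∘ Tuple.sort f) ⟨1, h⟩
  else 0

section AuxCheeger

variable {V : Type*} [Fintype V] [DecidableEq V] (G : SimpleGraph V) [DecidableRel G.Adj]

private lemma lambda2_nonneg' : 0 ≤ lambda2 G := by
  rw [lambda2]
  split_ifs with h
  · exact (SimpleGraph.posSemidef_lapMatrix ℝ G).eigenvalues_nonneg _
  · exact le_refl 0

private lemma rayleigh' (hconn : G.Connected) (x : V → ℝ) (hx : ∑ i, x i = 0) :
    lambda2 G * (x ⬝ᵥ x) ≤ x ⬝ᵥ (G.lapMatrix ℝ *ᵥ x) := by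
  have hne : Nonempty V := hconn.nonempty
  set hL := SimpleGraph.posSemidef_lapMatrix ℝ G with hLdef
  by_cases h1 : 1 < Fintype.card V
  swap
  · -- trivial case
    have hl : lambda2 G = 0 := by rw [lambda2, dif_neg h1]
    rw [hl, zero_mul]
    have := hL.dotProduct_mulVec_nonneg x
    simpa using this
  -- setup
  set μ : V → ℝ := hL.1.eigenvalues with hμdef
  set b := hL.1.eigenvectorBasis with hbdef
  have hl2eq : lambda2 G = (fun i : Fin (Fintype.card V) => μ ((Fintype.equivFin V).symm i))
      (Tuple.sort (fun i : Fin (Fintype.card V) => μ ((Fintype.equivFin V).symm i)) ⟨1, h1⟩) := by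
    rw [lambda2, dif_pos h1]; rfl
  set f : Fin (Fintype.card V) → ℝ := fun i => μ ((Fintype.equivFin V).symm i) with hfdef
  set σ := Tuple.sort f with hσdef
  have hμ0 : ∀ v, 0 ≤ μ v := fun v => hL.eigenvalues_nonneg v
  -- constancy of zero eigenvectors
  have hker : ∀ v : V, μ v = 0 → ∃ κ : ℝ, ∀ i, (b v : V → ℝ) i = κ := by
    intro v hv
    have h := hL.1.mulVec_eigenvectorBasis v
    rw [show hL.1.eigenvalues v = 0 from hv, zero_smul] at h
    have h2 : Matrix.toLin' (G.lapMatrix ℝ) (b v : V → ℝ) = 0 := by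
      rw [Matrix.toLin'_apply]; exact h
    rw [Matrix.toLin'_apply, G.lapMatrix_mulVec_eq_zero_iff_forall_reachable] at h2
    exact ⟨_, fun i => h2 i (Classical.arbitrary V) (hconn.preconnected i _)⟩
  -- orthonormality
  have horth : ∀ v w : V, (b v : V → ℝ) ⬝ᵥ (b w : V → ℝ) = if v = w then 1 else 0 := by
    intro v w
    have := orthonormal_iff_ite.mp b.orthonormal v w
    rw [dotProduct_comm]
    simpa [PiLp.inner_apply, RCLike.inner_apply, dotProduct, conj_trivial] using this
  -- uniqueness of zero eigenvalue
  have huniq : ∀ v w : V, μ v = 0 → μ w = 0 → v = w := by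
    intro v w hv hw
    by_contra hvw
    obtain ⟨κv, hκv⟩ := hker v hv
    obtain ⟨κw, hκw⟩ := hker w hw
    have h1' : (Fintype.card V : ℝ) * (κv * κv) = 1 := by
      have := horth v v
      rw [if_pos rfl] at this
      rw [← this]
      simp [dotProduct, hκv, Finset.sum_const, nsmul_eq_mul]
    have h2' : (Fintype.card V : ℝ) * (κv * κw) = 0 := by
      have := horth v w
      rw [if_neg hvw] at this
      rw [← this]
      simp [dotProduct, hκv, hκw, Finset.sum_const, nsmul_eq_mul]
    have h3' : (Fintype.card V : ℝ) * (κw * κw) = 1 := by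
      have := horth w w
      rw [if_pos rfl] at this
      rw [← this]
      simp [dotProduct, hκw, Finset.sum_const, nsmul_eq_mul]
    nlinarith [h1', h2', h3']
  -- existence of zero eigenvalue
  have hex : ∃ v : V, μ v = 0 := by
    have h1' : ∃ u : V → ℝ, u ≠ 0 ∧ G.lapMatrix ℝ *ᵥ u = 0 :=
      ⟨fun _ => 1, fun h => one_ne_zero (congrFun h (Classical.arbitrary V)),
        G.lapMatrix_mulVec_const_eq_zero⟩
    have hdet : (G.lapMatrix ℝ).det = 0 := by
      rw [← Matrix.exists_mulVec_eq_zero_iff]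
      obtain ⟨u, hu, h⟩ := h1'
      exact ⟨u, hu, h⟩
    have hprod := hL.1.det_eq_prod_eigenvalues
    rw [hdet] at hprod
    obtain ⟨v, _, hv⟩ := (Finset.prod_eq_zero_iff).mp hprod.symm
    exact ⟨v, by exact_mod_cast hv⟩
  obtain ⟨v0, hv0⟩ := hex
  -- sorted facts
  have hmono := Tuple.monotone_sort f
  have hzero : (0 : Fin (Fintype.card V)) = ⟨0, Nat.lt_of_lt_of_le Nat.zero_lt_one h1.le⟩ := rfl
  have hmin0 : f (σ 0) = 0 := by
    have hle : f (σ 0) ≤ f (Fintype.equivFin V v0) := by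
      have : f (σ 0) ≤ f (σ (σ.symm (Fintype.equivFin V v0))) := by
        apply hmono
        rw [Fin.le_def]
        exact Nat.zero_le _
      simpa using this
    have : f (Fintype.equivFin V v0) = 0 := by
      simp only [hfdef, Equiv.symm_apply_apply]; exact hv0
    have hge : 0 ≤ f (σ 0) := hμ0 _
    linarith [hle, this ▸ hle]
  have hσ0 : (Fintype.equivFin V).symm (σ 0) = v0 := huniq _ _ hmin0 hv0
  have hge2 : ∀ v : V, v ≠ v0 → lambda2 G ≤ μ v := by
    intro v hv
    rw [hl2eq]
    have hkne : σ.symm (Fintype.equivFin V v) ≠ 0 := by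
      intro h
      apply hv
      have : Fintype.equivFin V v = σ 0 := by
        rw [← h]; simp
      rw [← hσ0, ← this, Equiv.symm_apply_apply]
    have h1le : (⟨1, h1⟩ : Fin (Fintype.card V)) ≤ σ.symm (Fintype.equivFin V v) := by
      rw [Fin.le_def]
      exact Nat.one_le_iff_ne_zero.mpr (fun h => hkne (Fin.ext h))
    have := hmono h1le
    rw [Function.comp_apply, Function.comp_apply, ← hσdef, Equiv.apply_symm_apply] at this
    simpa [hfdef] using this
  -- expansion
  set c : V → ℝ := fun v => (b v : V → ℝ) ⬝ᵥ x with hcdef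
  have hxdec : x = ∑ v : V, c v • (b v : V → ℝ) := by
    have h := b.sum_repr' (WithLp.toLp 2 x)
    funext i
    have h2 := congrFun (congrArg (fun y : EuclideanSpace ℝ V => (y : V → ℝ)) h) i
    simp only [PiLp.inner_apply, RCLike.inner_apply, conj_trivial, WithLp.ofLp_toLp] at h2
    rw [← h2]
    simp [hcdef, dotProduct, Finset.sum_apply, mul_comm]
  have hdotsum : ∀ y g : V → ℝ, y ⬝ᵥ (∑ v : V, g v • (b v : V → ℝ))
      = ∑ v : V, g v * (y ⬝ᵥ (b v : V → ℝ)) := by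
    intro y g
    have hfun : (∑ v : V, g v • (b v : V → ℝ)) = fun i => ∑ v : V, g v * (b v : V → ℝ) i := by
      funext i
      rw [Finset.sum_apply]
      exact Finset.sum_congr rfl fun v _ => rfl
    rw [hfun]
    simp only [dotProduct]
    simp only [Finset.mul_sum]
    rw [Finset.sum_comm]
    exact Finset.sum_congr rfl fun v _ => Finset.sum_congr rfl fun i _ => by ring
  have hLx : G.lapMatrix ℝ *ᵥ x = ∑ v : V, (c v * μ v) • (b v : V → ℝ) := by
    conv_lhs => rw [hxdec]
    rw [← Matrix.mulVecLin_apply, map_sum]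
    refine Finset.sum_congr rfl fun v _ => ?_
    rw [_root_.map_smul, Matrix.mulVecLin_apply]
    rw [show (G.lapMatrix ℝ) *ᵥ (b v : V → ℝ) = μ v • (b v : V → ℝ) from
      hL.1.mulVec_eigenvectorBasis v]
    rw [smul_smul, mul_comm]
  have hquad : x ⬝ᵥ (G.lapMatrix ℝ *ᵥ x) = ∑ v : V, μ v * (c v) ^ 2 := by
    rw [hLx, hdotsum]
    refine Finset.sum_congr rfl fun v _ => ?_
    rw [dotProduct_comm]
    have hcv : (b v : V → ℝ) ⬝ᵥ x = c v := rfl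
    rw [hcv]
    ring
  have hnorm : x ⬝ᵥ x = ∑ v : V, (c v) ^ 2 := by
    nth_rewrite 2 [hxdec]
    rw [hdotsum]
    refine Finset.sum_congr rfl fun v _ => ?_
    rw [dotProduct_comm]
    have hcv : (b v : V → ℝ) ⬝ᵥ x = c v := rfl
    rw [hcv]
    ring
  have hc0 : c v0 = 0 := by
    obtain ⟨κ, hκ⟩ := hker v0 hv0
    have h : c v0 = ∑ i : V, κ * x i := by
      simp [hcdef, dotProduct, hκ]
    rw [h, ← Finset.mul_sum, hx, mul_zero]
  calc lambda2 G * (x ⬝ᵥ x) = ∑ v : V, lambda2 G * (c v) ^ 2 := by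
        rw [hnorm, Finset.mul_sum]
    _ ≤ ∑ v : V, μ v * (c v) ^ 2 := by
        refine Finset.sum_le_sum fun v _ => ?_
        by_cases hvv : v = v0
        · subst hvv; rw [hc0]; simp
        · exact mul_le_mul_of_nonneg_right (hge2 v hvv) (sq_nonneg _)
    _ = x ⬝ᵥ (G.lapMatrix ℝ *ᵥ x) := hquad.symm

private lemma key' (hconn : G.Connected) (S : Set V) (hS : S.Nonempty)
    (hc : 2 * S.ncard ≤ Fintype.card V) :
    lambda2 G * (S.ncard : ℝ) ≤ 2 * (edgeBoundaryCount G S : ℝ) := by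
  classical
  have hne : Nonempty V := hconn.nonempty
  set n := Fintype.card V with hndef
  set s := S.ncard with hsdef
  have hs1 : 1 ≤ s := (Set.ncard_pos S.toFinite).mpr hS
  set ind : V → ℝ := fun i => if i ∈ S then 1 else 0 with hinddef
  set x : V → ℝ := fun i => (n : ℝ) * ind i - (s : ℝ) with hxdef
  have hfilter : (univ.filter (fun i => i ∈ S)).card = s := by
    rw [hsdef, Set.ncard_eq_toFinset_card']
    congr 1
    ext i
    simp
  have hsum_ind : ∑ i : V, ind i = (s : ℝ) := by
    rw [hinddef]
    rw [Finset.sum_boole, hfilter]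
  have hsum : ∑ i : V, x i = 0 := by
    simp only [hxdef]
    rw [Finset.sum_sub_distrib, ← Finset.mul_sum, hsum_ind, Finset.sum_const, Finset.card_univ,
      nsmul_eq_mul, ← hndef]
    ring
  have hray := rayleigh' G hconn x hsum
  -- boundary count as finset card
  have hB : (edgeBoundaryCount G S : ℕ)
      = (univ.filter (fun p : V × V => G.Adj p.1 p.2 ∧ p.1 ∈ S ∧ p.2 ∉ S)).card := by
    rw [edgeBoundaryCount, Set.ncard_eq_toFinset_card']
    congr 1
    ext p
    simp
  have hB2 : (univ.filter (fun p : V × V => G.Adj p.1 p.2 ∧ p.1 ∉ S ∧ p.2 ∈ S)).card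
      = (univ.filter (fun p : V × V => G.Adj p.1 p.2 ∧ p.1 ∈ S ∧ p.2 ∉ S)).card := by
    apply Finset.card_bij' (fun p _ => Prod.swap p) (fun p _ => Prod.swap p)
    · intro p hp
      simp only [Finset.mem_filter, Finset.mem_univ, true_and] at hp ⊢
      exact ⟨hp.1.symm, hp.2.2, hp.2.1⟩
    · intro p hp
      simp only [Finset.mem_filter, Finset.mem_univ, true_and] at hp ⊢
      exact ⟨hp.1.symm, hp.2.2, hp.2.1⟩
    · intro p _; rfl
    · intro p _; rfl
  have hpt : ∀ i j : V, (if G.Adj i j then (ind i - ind j)^2 else 0)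
      = (if G.Adj i j ∧ i ∈ S ∧ j ∉ S then (1:ℝ) else 0)
        + (if G.Adj i j ∧ i ∉ S ∧ j ∈ S then (1:ℝ) else 0) := by
    intro i j
    by_cases h : G.Adj i j <;> by_cases hi : i ∈ S <;> by_cases hj : j ∈ S <;>
      simp [hinddef, h, hi, hj] <;> norm_num
  have hcount : ∑ i : V, ∑ j : V, (if G.Adj i j then (ind i - ind j)^2 else 0)
      = 2 * (edgeBoundaryCount G S : ℝ) := by
    have h1' : ∑ i : V, ∑ j : V, (if G.Adj i j then (ind i - ind j)^2 else 0)
        = ∑ i : V, ∑ j : V, ((if G.Adj i j ∧ i ∈ S ∧ j ∉ S then (1:ℝ) else 0)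
          + (if G.Adj i j ∧ i ∉ S ∧ j ∈ S then (1:ℝ) else 0)) :=
      Finset.sum_congr rfl fun i _ => Finset.sum_congr rfl fun j _ => hpt i j
    rw [h1']
    simp only [Finset.sum_add_distrib]
    have e1 : ∑ i : V, ∑ j : V, (if G.Adj i j ∧ i ∈ S ∧ j ∉ S then (1:ℝ) else 0)
        = ((univ.filter (fun p : V × V => G.Adj p.1 p.2 ∧ p.1 ∈ S ∧ p.2 ∉ S)).card : ℝ) := by
      rw [← Finset.sum_product', Finset.univ_product_univ, Finset.sum_boole]
    have e2 : ∑ i : V, ∑ j : V, (if G.Adj i j ∧ i ∉ S ∧ j ∈ S then (1:ℝ) else 0)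
        = ((univ.filter (fun p : V × V => G.Adj p.1 p.2 ∧ p.1 ∉ S ∧ p.2 ∈ S)).card : ℝ) := by
      rw [← Finset.sum_product', Finset.univ_product_univ, Finset.sum_boole]
    rw [e1, e2, hB2, hB]
    push_cast
    ring
  have hQ : x ⬝ᵥ (G.lapMatrix ℝ *ᵥ x) = (n : ℝ)^2 * (edgeBoundaryCount G S : ℝ) := by
    have h2' : x ⬝ᵥ (G.lapMatrix ℝ *ᵥ x)
        = (∑ i : V, ∑ j : V, if G.Adj i j then (x i - x j)^2 else 0) / 2 := by
      rw [← Matrix.toLinearMap₂'_apply', SimpleGraph.lapMatrix_toLinearMap₂']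
    rw [h2']
    have h3' : ∀ i j : V, (if G.Adj i j then (x i - x j)^2 else 0)
        = (n : ℝ)^2 * (if G.Adj i j then (ind i - ind j)^2 else 0) := by
      intro i j
      by_cases h : G.Adj i j <;> simp [hxdef, h] <;> ring
    calc (∑ i : V, ∑ j : V, if G.Adj i j then (x i - x j)^2 else 0) / 2
        = ((n:ℝ)^2 * ∑ i : V, ∑ j : V, if G.Adj i j then (ind i - ind j)^2 else 0) / 2 := by
          rw [Finset.mul_sum]
          congr 1
          refine Finset.sum_congr rfl fun i _ => ?_
          rw [Finset.mul_sum]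
          exact Finset.sum_congr rfl fun j _ => h3' i j
      _ = (n : ℝ)^2 * (edgeBoundaryCount G S : ℝ) := by rw [hcount]; ring
  have hind2 : ∀ i, ind i * ind i = ind i := by
    intro i
    by_cases hi : i ∈ S <;> simp [hinddef, hi]
  have hnormx : x ⬝ᵥ x = (n : ℝ) * (s : ℝ) * ((n : ℝ) - (s : ℝ)) := by
    have : ∀ i, x i * x i = (n:ℝ)^2 * ind i - 2*(n:ℝ)*(s:ℝ)* ind i + (s:ℝ)^2 := by
      intro i
      have h := hind2 i
      simp only [hxdef]
      nlinarith [h]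
    rw [dotProduct]
    rw [Finset.sum_congr rfl fun i _ => this i]
    rw [Finset.sum_add_distrib, Finset.sum_sub_distrib, ← Finset.mul_sum, ← Finset.mul_sum,
      hsum_ind, Finset.sum_const, Finset.card_univ, nsmul_eq_mul, ← hndef]
    ring
  -- final
  have hl0 := lambda2_nonneg' G
  have hN0 : (0:ℝ) < (n:ℝ) := by
    have : 0 < n := Fintype.card_pos
    exact_mod_cast this
  have hS0 : (0:ℝ) < (s:ℝ) := by exact_mod_cast hs1
  have h2s : 2 * (s:ℝ) ≤ (n:ℝ) := by exact_mod_cast hc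
  rw [hnormx, hQ] at hray
  nlinarith [hray, mul_nonneg (mul_nonneg (mul_nonneg hl0 hN0.le) hS0.le)
    (by linarith : (0:ℝ) ≤ (n:ℝ) - 2*(s:ℝ)), mul_pos hN0 hN0, hl0, hS0, hN0]


end AuxCheeger

/-- For a connected finite graph, the second smallest Laplacian eigenvalue is at most
twice the isoperimetric constant. -/
theorem lambda2_le_two_mul_isoConst {V : Type*} [Fintype V] [DecidableEq V]
    (G : SimpleGraph V) [DecidableRel G.Adj] (hconn : G.Connected) :
    lambda2 G ≤ 2 * isoConst V G := by
  classical
  have hne : Nonempty V := hconn.nonempty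
  by_cases h1 : 1 < Fintype.card V
  · have hTne : ({x : ℝ | ∃ S : Set V, S.Nonempty ∧ 2 * S.ncard ≤ Fintype.card V ∧
        x = (edgeBoundaryCount G S : ℝ) / (S.ncard : ℝ)}).Nonempty := by
      obtain ⟨v⟩ := hne
      refine ⟨_, ⟨{v}, Set.singleton_nonempty v, ?_, rfl⟩⟩
      rw [Set.ncard_singleton]
      omega
    have hlb : ∀ y ∈ {x : ℝ | ∃ S : Set V, S.Nonempty ∧ 2 * S.ncard ≤ Fintype.card V ∧
        x = (edgeBoundaryCount G S : ℝ) / (S.ncard : ℝ)}, lambda2 G / 2 ≤ y := by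
      rintro y ⟨S, hS, hc, rfl⟩
      have hk := key' G hconn S hS hc
      have hs0 : (0:ℝ) < (S.ncard : ℝ) := by
        exact_mod_cast (Set.ncard_pos S.toFinite).mpr hS
      rw [div_le_div_iff₀ (by norm_num) hs0]
      linarith [hk]
    have hinf := le_csInf hTne hlb
    rw [isoConst]
    linarith [hinf]
  · rw [lambda2, dif_neg h1]
    have hempty : {x : ℝ | ∃ S : Set V, S.Nonempty ∧ 2 * S.ncard ≤ Fintype.card V ∧
        x = (edgeBoundaryCount G S : ℝ) / (S.ncard : ℝ)} = ∅ := by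
      ext y
      simp only [Set.mem_setOf_eq, Set.mem_empty_iff_false, iff_false]
      rintro ⟨S, hS, hc, -⟩
      have h2 : 1 ≤ S.ncard := (Set.ncard_pos S.toFinite).mpr hS
      have h3 : Fintype.card V ≤ 1 := not_lt.mp h1
      omega
    rw [isoConst, hempty, Real.sInf_empty]
    norm_num
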